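/- Let μ be the measure on ℝ obtained by drawing p uniformly from [0,1] and then returning p + 1 with probability p and p with probability 1 − p; formally, μ = (volume.restrict (Set.Icc (0:ℝ) 1)).bind (fun p => ENNReal.ofReal p • Measure.dirac (p + 1) + ENNReal.ofReal (1 − p) • Measure.dirac p). Then μ = volume.withDensity (fun z => ENNReal.ofReal ((if 1 ≤ z ∧ z ≤ 2 then z − 1 else 0) + (if 0 ≤ z ∧ z ≤ 1 then 1 − z else 0))); that is, this program has probability density function z ↦ [1 ≤ z ≤ 2]·(z − 1) + [0 ≤ z ≤ 1]·(1 − z) with respect to Lebesgue measure. -/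

import Mathlib

open MeasureTheory
open scoped ENNReal

theorem uniform_bernoulli_program_pdf :
    (volume.restrict (Set.Icc (0:ℝ) 1)).bind
        (fun p => ENNReal.ofReal p • Measure.dirac (p + 1) +
          ENNReal.ofReal (1 - p) • Measure.dirac p) =
      volume.withDensity
        (fun z => ENNReal.ofReal
          ((if 1 ≤ z ∧ z ≤ 2 then z - 1 else 0) +
           (if 0 ≤ z ∧ z ≤ 1 then 1 - z else 0))) := by
  ext s hs
  have hκ : Measurable (fun p : ℝ => ENNReal.ofReal p • Measure.dirac (p + 1) +
      ENNReal.ofReal (1 - p) • Measure.dirac p) := by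
    apply Measure.measurable_of_measurable_coe
    intro t ht
    simp only [Measure.coe_add, Measure.coe_smul, Pi.add_apply, Pi.smul_apply,
      Measure.dirac_apply' _ ht, smul_eq_mul]
    apply Measurable.add
    · exact (ENNReal.measurable_ofReal.comp measurable_id).mul
        ((measurable_one.indicator ht).comp (measurable_add_const 1))
    · exact (ENNReal.measurable_ofReal.comp (measurable_const.sub measurable_id)).mul
        (measurable_one.indicator ht)
  rw [Measure.bind_apply hs hκ.aemeasurable, withDensity_apply _ hs]
  simp only [Measure.coe_add, Measure.coe_smul, Pi.add_apply, Pi.smul_apply,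
    Measure.dirac_apply' _ hs, smul_eq_mul]
  rw [← lintegral_indicator measurableSet_Icc, ← lintegral_indicator hs]
  have key : ∀ z : ℝ,
      (Set.Icc (0:ℝ) 1).indicator (fun p => ENNReal.ofReal p * s.indicator 1 (p + 1) +
        ENNReal.ofReal (1 - p) * s.indicator 1 p) z =
      (fun p => (Set.Icc (0:ℝ) 1).indicator
          (fun q => ENNReal.ofReal q * s.indicator 1 (q + 1)) p) z +
      (Set.Icc (0:ℝ) 1).indicator (fun p => ENNReal.ofReal (1 - p) * s.indicator 1 p) z := by
    intro z
    by_cases h : z ∈ Set.Icc (0:ℝ) 1 <;> simp [h]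
  rw [lintegral_congr key, lintegral_add_left]
  · -- translate the first integral
    have h1 : ∫⁻ p, (Set.Icc (0:ℝ) 1).indicator
        (fun q => ENNReal.ofReal q * s.indicator 1 (q + 1)) p =
        ∫⁻ z, (Set.Icc (1:ℝ) 2).indicator
        (fun q => ENNReal.ofReal (q - 1) * s.indicator 1 q) z := by
      have := lintegral_add_right_eq_self (μ := (volume : Measure ℝ))
        (fun z => (Set.Icc (1:ℝ) 2).indicator
          (fun q => ENNReal.ofReal (q - 1) * s.indicator 1 q) z) 1
      rw [← this]
      apply lintegral_congr
      intro p
      by_cases h : p ∈ Set.Icc (0:ℝ) 1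
      · have h' : p + 1 ∈ Set.Icc (1:ℝ) 2 := by
          simp only [Set.mem_Icc] at h ⊢; constructor <;> linarith [h.1, h.2]
        simp [h, h', Set.indicator_of_mem]
      · have h' : p + 1 ∉ Set.Icc (1:ℝ) 2 := by
          simp only [Set.mem_Icc] at h ⊢; intro hc; exact h ⟨by linarith [hc.1], by linarith [hc.2]⟩
        simp [h, h']
    rw [h1, ← lintegral_add_left]
    · apply lintegral_congr
      intro z
      by_cases hzs : z ∈ s
      · by_cases h12 : z ∈ Set.Icc (1:ℝ) 2 <;> by_cases h01 : z ∈ Set.Icc (0:ℝ) 1 <;>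
          simp only [Set.mem_Icc] at h12 h01 <;>
          simp [hzs, Set.indicator_apply, Set.mem_Icc, h12, h01]
      · simp [hzs, Set.indicator_apply]
    · exact ((ENNReal.measurable_ofReal.comp (measurable_id.sub measurable_const)).mul
        ((measurable_one.indicator hs))).indicator measurableSet_Icc
  · exact ((ENNReal.measurable_ofReal.comp measurable_id).mul
      ((measurable_one.indicator hs).comp (measurable_add_const 1))).indicator measurableSet_Icc
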